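/- Let P be an irreducible stochastic matrix on a finite set S, f : S → ℝ, and suppose C := sup_{θ, x, y} v_θ(y)/v_θ(x) < ∞ where v_θ is the right Perron–Frobenius eigenvector of the tilted matrix P̃_θ. Then for the chain started at any fixed state and any μ ≥ μ(0) (the stationary mean of P composed with f): P(f(X₁)+⋯+f(X_n) ≥ nμ) ≤ C · exp(−n · sup_{η ≥ 0}(ημ − A(η))), where A(η) = log ρ(P̃_η) is the log-Perron–Frobenius eigenvalue. -/

import Mathlib

open MeasureTheory

noncomputable def chernoffF {S : Type*} [Fintype S] (M : S → S → ℝ) : ℕ → S → ℝ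
  | 0 => fun _ => 1
  | n+1 => fun x => ∑ y, M x y * chernoffF M n y

lemma chernoff_pathSum {S : Type*} [Fintype S] [DecidableEq S] (M : S → S → ℝ) :
    ∀ (n : ℕ) (x : S),
      (∑ q : Fin (n+1) → S, (if q 0 = x then (1:ℝ) else 0)
        * ∏ i : Fin n, M (q i.castSucc) (q i.succ)) = chernoffF M n x := by
  intro n
  induction n with
  | zero =>
    intro x
    rw [show chernoffF M 0 x = 1 from rfl]
    rw [← (Equiv.funUnique (Fin 1) S).symm.sum_comp]
    simp
  | succ n ih =>
    intro x
    rw [← (Fin.consEquiv (fun _ : Fin (n+2) => S)).sum_comp]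
    rw [Fintype.sum_prod_type]
    have hrw : ∀ y, ∀ t : Fin (n+1) → S,
        (if (Fin.consEquiv (fun _ : Fin (n+2) => S)) (y, t) 0 = x then (1:ℝ) else 0)
          * ∏ i : Fin (n+1), M ((Fin.consEquiv (fun _ : Fin (n+2) => S)) (y, t) i.castSucc)
              ((Fin.consEquiv (fun _ : Fin (n+2) => S)) (y, t) i.succ)
        = (if y = x then (1:ℝ) else 0) * (M y (t 0) *
            ∏ i : Fin n, M (t i.castSucc) (t i.succ)) := by
      intro y t
      have h0 : (Fin.consEquiv (fun _ : Fin (n+2) => S)) (y, t) = Fin.cons y t := rfl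
      rw [h0, Fin.prod_univ_succ]
      have h1 : ∀ i : Fin n,
          M ((Fin.cons y t : Fin (n+2) → S) ((i.succ : Fin (n+1)).castSucc)) ((Fin.cons y t : Fin (n+2) → S) (i.succ.succ))
            = M (t i.castSucc) (t i.succ) := by
        intro i
        rw [show (i.succ : Fin (n+1)).castSucc = (i.castSucc).succ from (Fin.succ_castSucc i).symm]
        simp
      rw [Finset.prod_congr rfl fun i _ => h1 i]
      simp [Fin.succ_castSucc]
    simp only [hrw]
    rw [Finset.sum_comm]
    have hcol : ∀ t : Fin (n+1) → S,
        ∑ y, (if y = x then (1:ℝ) else 0) * (M y (t 0) *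
            ∏ i : Fin n, M (t i.castSucc) (t i.succ))
        = M x (t 0) * ∏ i : Fin n, M (t i.castSucc) (t i.succ) := by
      intro t
      rw [Finset.sum_eq_single x]
      · simp
      · intro b _ hb; simp [hb]
      · intro h; exact absurd (Finset.mem_univ x) h
    rw [Finset.sum_congr rfl fun t _ => hcol t]
    have hexp : ∀ t : Fin (n+1) → S,
        M x (t 0) * ∏ i : Fin n, M (t i.castSucc) (t i.succ)
        = ∑ z, M x z * ((if t 0 = z then (1:ℝ) else 0) *
            ∏ i : Fin n, M (t i.castSucc) (t i.succ)) := by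
      intro t
      rw [Finset.sum_eq_single (t 0)]
      · simp
      · intro b _ hb; simp [show ¬ (t 0 = b) from fun h => hb h.symm]
      · intro h; exact absurd (Finset.mem_univ (t 0)) h
    rw [Finset.sum_congr rfl fun t _ => hexp t]
    rw [Finset.sum_comm]
    rw [show chernoffF M (n+1) x = ∑ y, M x y * chernoffF M n y from rfl]
    refine Finset.sum_congr rfl fun z _ => ?_
    rw [← Finset.mul_sum, ih z]

lemma chernoffF_le {S : Type*} [Fintype S] (M : S → S → ℝ) (v : S → ℝ) (ρ K : ℝ)
    (hM0 : ∀ x y, 0 ≤ M x y)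
    (heig : ∀ x, ∑ y, M x y * v y = ρ * v x)
    (hKv : ∀ y, (1:ℝ) ≤ K * v y) :
    ∀ n y, chernoffF M n y ≤ K * (ρ ^ n * v y) := by
  intro n
  induction n with
  | zero => intro y; rw [show chernoffF M 0 y = 1 from rfl]; simpa using hKv y
  | succ n ih =>
    intro y
    rw [show chernoffF M (n+1) y = ∑ z, M y z * chernoffF M n z from rfl]
    calc ∑ z, M y z * chernoffF M n z
        ≤ ∑ z, M y z * (K * (ρ ^ n * v z)) := by
          refine Finset.sum_le_sum fun z _ => ?_
          exact mul_le_mul_of_nonneg_left (ih z) (hM0 y z)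
      _ = K * ρ ^ n * ∑ z, M y z * v z := by
          rw [Finset.mul_sum]; refine Finset.sum_congr rfl fun z _ => by ring
      _ = K * (ρ ^ (n+1) * v y) := by rw [heig y]; ring

/-- Chernoff-type concentration bound for an irreducible finite Markov chain
started at a fixed state: for any `μval ≥ μ(0)` (the stationary mean),
`P(f(X₁)+⋯+f(X_n) ≥ n μval) ≤ C * exp (−n * sup_{η ≥ 0} (η μval − A η))`,
where `A η = log ρ(P̃_η)` and `C` bounds the ratios of entries of the right
Perron–Frobenius eigenvectors of the tilted matrices. -/
theorem stmt_8
    {S : Type*} [Fintype S] [DecidableEq S] [MeasurableSpace S] [MeasurableSingletonClass S]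
    {Ω : Type*} [MeasurableSpace Ω] (μ : Measure Ω) [IsProbabilityMeasure μ]
    (X : ℕ → Ω → S) (hX : ∀ i, Measurable (X i))
    (P : S → S → ℝ) (f : S → ℝ) (x₀ : S)
    (hP0 : ∀ x y, 0 ≤ P x y) (hP1 : ∀ x, ∑ y, P x y = 1)
    (hirr : ∀ x y : S, ∃ n : ℕ, 0 < ((Matrix.of P) ^ n) x y)
    (hMC : ∀ (n : ℕ) (path : ℕ → S),
      (μ {ω | ∀ i ≤ n, X i ω = path i}).toReal
        = (if path 0 = x₀ then (1 : ℝ) else 0)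
            * ∏ i ∈ Finset.range n, P (path i) (path (i + 1)))
    (ρ : ℝ → ℝ) (v : ℝ → S → ℝ)
    (hρ : ∀ θ, 0 < ρ θ) (hv : ∀ θ x, 0 < v θ x)
    (heig : ∀ θ x, ∑ y, P x y * Real.exp (θ * f y) * v θ y = ρ θ * v θ x)
    (C : ℝ) (hC : ∀ (θ : ℝ) (x y : S), v θ y ≤ C * v θ x)
    (pi : S → ℝ)
    (hpi0 : ∀ x, 0 ≤ pi x) (hpi1 : ∑ x, pi x = 1)
    (hpistat : ∀ y, ∑ x, pi x * P x y = pi y)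
    (μval : ℝ) (hμval : (∑ x, pi x * f x) ≤ μval) (n : ℕ) :
    (μ {ω | (n : ℝ) * μval ≤ ∑ i ∈ Finset.range n, f (X (i + 1) ω)}).toReal
      ≤ C * Real.exp (-(n : ℝ) *
          ⨆ η : Set.Ici (0 : ℝ), ((η : ℝ) * μval - Real.log (ρ η))) := by
  classical
  set E : Set Ω := {ω | (n : ℝ) * μval ≤ ∑ i ∈ Finset.range n, f (X (i + 1) ω)} with hEdef
  have hfE : MeasurableSet E := by
    apply measurableSet_le measurable_const
    exact Finset.measurable_sum _ (fun i _ => (measurable_of_countable f).comp (hX (i+1)))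
  set eqf : (Fin (n+1) → S) → ℕ → S :=
    fun q i => if h : i < n+1 then q ⟨i, h⟩ else q 0 with heqf
  set Cyl : (Fin (n+1) → S) → Set Ω := fun q => {ω | ∀ i ≤ n, X i ω = eqf q i} with hCyl
  have hCylMeas : ∀ q, MeasurableSet (Cyl q) := by
    intro q
    have h : Cyl q = ⋂ (i : ℕ), ⋂ (_ : i ≤ n), X i ⁻¹' {eqf q i} := by
      ext ω; simp [hCyl, Set.mem_iInter]
    rw [h]
    exact MeasurableSet.iInter fun i =>
      MeasurableSet.iInter fun _ => hX i (measurableSet_singleton _)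
  have heqf_val : ∀ (q : Fin (n+1) → S) (i : Fin (n+1)), eqf q i.val = q i := by
    intro q i
    simp only [heqf]
    rw [dif_pos i.isLt]
  have hdisj : Pairwise (Function.onFun Disjoint fun q => E ∩ Cyl q) := by
    intro q q' hqq'
    refine Set.disjoint_left.mpr fun ω hω hω' => hqq' ?_
    funext i
    have h1 := hω.2 i.val (by omega)
    have h2 := hω'.2 i.val (by omega)
    rw [heqf_val q i] at h1
    rw [heqf_val q' i] at h2
    rw [← h1, ← h2]
  have hcover : E = ⋃ q, (E ∩ Cyl q) := by
    ext ω
    constructor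
    · intro hω
      refine Set.mem_iUnion.mpr ⟨fun i => X i.val ω, hω, fun i hi => ?_⟩
      have : eqf (fun j : Fin (n+1) => X j.val ω) i
          = (fun j : Fin (n+1) => X j.val ω) ⟨i, by omega⟩ := by
        simp only [heqf]; rw [dif_pos (by omega : i < n+1)]
      rw [this]
    · rintro hω
      obtain ⟨q, hq, _⟩ := Set.mem_iUnion.mp hω
      exact hq
  have hsum : (μ E).toReal = ∑ q : Fin (n+1) → S, (μ (E ∩ Cyl q)).toReal := by
    have h1 : μ E = ∑' q, μ (E ∩ Cyl q) := by
      conv_lhs => rw [hcover]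
      exact measure_iUnion hdisj (fun q => hfE.inter (hCylMeas q))
    rw [h1, tsum_fintype, ENNReal.toReal_sum (fun q _ => measure_ne_top μ _)]
  set Sq : (Fin (n+1) → S) → ℝ := fun q => ∑ i ∈ Finset.range n, f (eqf q (i+1)) with hSq
  set W : (Fin (n+1) → S) → ℝ := fun q =>
    (if eqf q 0 = x₀ then (1:ℝ) else 0)
      * ∏ i ∈ Finset.range n, P (eqf q i) (eqf q (i+1)) with hWdef
  have hW0 : ∀ q, 0 ≤ W q := by
    intro q
    apply mul_nonneg
    · split <;> norm_num
    · exact Finset.prod_nonneg fun i _ => hP0 _ _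
  have hWq : ∀ q, (μ (Cyl q)).toReal = W q := fun q => hMC n (eqf q)
  have hSqeq : ∀ (q) (ω : Ω), ω ∈ Cyl q →
      ∑ i ∈ Finset.range n, f (X (i+1) ω) = Sq q := by
    intro q ω hω
    refine Finset.sum_congr rfl fun i hi => ?_
    rw [hω (i+1) (Finset.mem_range.mp hi)]
  have hterm : ∀ q, (μ (E ∩ Cyl q)).toReal
      = if (n:ℝ)*μval ≤ Sq q then W q else 0 := by
    intro q
    by_cases hc : (n:ℝ)*μval ≤ Sq q
    · rw [if_pos hc]
      have h : E ∩ Cyl q = Cyl q := by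
        apply Set.inter_eq_self_of_subset_right
        intro ω hω
        show (n:ℝ)*μval ≤ ∑ i ∈ Finset.range n, f (X (i+1) ω)
        rw [hSqeq q ω hω]; exact hc
      rw [h]; exact hWq q
    · rw [if_neg hc]
      have h : E ∩ Cyl q = ∅ := by
        ext ω
        simp only [Set.mem_inter_iff, Set.mem_empty_iff_false, iff_false, not_and]
        intro hωE hωC
        exact hc (by rw [← hSqeq q ω hωC]; exact hωE)
      rw [h]; simp
  have key : ∀ η : ℝ, 0 ≤ η →
      (μ E).toReal ≤ C * Real.exp (-(n:ℝ) * (η * μval - Real.log (ρ η))) := by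
    intro η hη
    set M : S → S → ℝ := fun x y => P x y * Real.exp (η * f y) with hMdef
    have hM0 : ∀ x y, 0 ≤ M x y := fun x y => mul_nonneg (hP0 x y) (Real.exp_pos _).le
    have hKv : ∀ y, (1:ℝ) ≤ (C / v η x₀) * v η y := by
      intro y
      rw [div_mul_eq_mul_div, le_div_iff₀ (hv η x₀), one_mul]
      exact hC η y x₀
    have hFle' : chernoffF M n x₀ ≤ C * ρ η ^ n := by
      have hFle := chernoffF_le M (v η) (ρ η) (C / v η x₀) hM0 (heig η) hKv n x₀
      calc chernoffF M n x₀ ≤ (C / v η x₀) * (ρ η ^ n * v η x₀) := hFle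
        _ = C * ρ η ^ n * (v η x₀ / v η x₀) := by ring
        _ = C * ρ η ^ n := by rw [div_self (hv η x₀).ne', mul_one]
    rw [hsum]
    calc ∑ q : Fin (n+1) → S, (μ (E ∩ Cyl q)).toReal
        = ∑ q : Fin (n+1) → S, (if (n:ℝ)*μval ≤ Sq q then W q else 0) :=
          Finset.sum_congr rfl fun q _ => hterm q
      _ ≤ ∑ q : Fin (n+1) → S, W q * Real.exp (η * (Sq q - (n:ℝ)*μval)) := by
          refine Finset.sum_le_sum fun q _ => ?_
          by_cases hc : (n:ℝ)*μval ≤ Sq q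
          · rw [if_pos hc]
            nth_rewrite 1 [← mul_one (W q)]
            exact mul_le_mul_of_nonneg_left
              (Real.one_le_exp (mul_nonneg hη (by linarith))) (hW0 q)
          · rw [if_neg hc]
            have := hW0 q
            positivity
      _ = (∑ q : Fin (n+1) → S, (if eqf q 0 = x₀ then (1:ℝ) else 0)
              * ∏ i ∈ Finset.range n, M (eqf q i) (eqf q (i+1)))
            * Real.exp (-(η * ((n:ℝ)*μval))) := by
          rw [Finset.sum_mul]
          refine Finset.sum_congr rfl fun q _ => ?_
          rw [show η * (Sq q - (n:ℝ)*μval) = (∑ i ∈ Finset.range n, η * f (eqf q (i+1)))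
                + (-(η * ((n:ℝ)*μval))) by rw [← Finset.mul_sum]; ring,
              Real.exp_add, Real.exp_sum]
          simp only [hWdef, hMdef]
          rw [Finset.prod_mul_distrib]
          ring
      _ = chernoffF M n x₀ * Real.exp (-(η * ((n:ℝ)*μval))) := by
          congr 1
          rw [← chernoff_pathSum M n x₀]
          refine Finset.sum_congr rfl fun q _ => ?_
          congr 1
          · rw [← Fin.prod_univ_eq_prod_range (fun i => M (eqf q i) (eqf q (i+1))) n]
            refine Finset.prod_congr rfl fun i _ => ?_
            have e1 : eqf q (i : ℕ) = q i.castSucc := by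
              rw [show ((i : ℕ) : ℕ) = (i.castSucc : Fin (n+1)).val from rfl]
              exact heqf_val q i.castSucc
            have e2 : eqf q ((i : ℕ) + 1) = q i.succ := by
              rw [show ((i : ℕ) + 1) = (i.succ : Fin (n+1)).val from rfl]
              exact heqf_val q i.succ
            rw [e1, e2]
      _ ≤ (C * ρ η ^ n) * Real.exp (-(η * ((n:ℝ)*μval))) :=
          mul_le_mul_of_nonneg_right hFle' (Real.exp_pos _).le
      _ = C * Real.exp (-(n:ℝ) * (η*μval - Real.log (ρ η))) := by
          have hpow : ρ η ^ n = Real.exp ((n:ℝ) * Real.log (ρ η)) := by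
            rw [Real.exp_nat_mul, Real.exp_log (hρ η)]
          rw [hpow, mul_assoc, ← Real.exp_add]
          congr 1
          ring
  have hC1 : (1:ℝ) ≤ C := by
    have h := hC 0 x₀ x₀
    have h2 := hv 0 x₀
    nlinarith
  have hle1 : (μ E).toReal ≤ 1 := by
    have h := prob_le_one (μ := μ) (s := E)
    calc (μ E).toReal ≤ (1 : ENNReal).toReal := ENNReal.toReal_mono (by simp) h
      _ = 1 := by simp
  by_cases hbdd : BddAbove (Set.range fun η : Set.Ici (0:ℝ) =>
      (η:ℝ) * μval - Real.log (ρ η))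
  · haveI : Nonempty (Set.Ici (0:ℝ)) := ⟨⟨0, Set.self_mem_Ici⟩⟩
    set s := ⨆ η : Set.Ici (0:ℝ), ((η:ℝ) * μval - Real.log (ρ η)) with hs
    have hεb : ∀ ε : ℝ, 0 < ε → (μ E).toReal ≤ C * Real.exp (-(n:ℝ) * (s - ε)) := by
      intro ε hε
      obtain ⟨η, hηlt⟩ := exists_lt_of_lt_ciSup
        (f := fun η : Set.Ici (0:ℝ) => (η:ℝ)*μval - Real.log (ρ η))
        (show s - ε < s by linarith)
      calc (μ E).toReal ≤ C * Real.exp (-(n:ℝ) * ((η:ℝ)*μval - Real.log (ρ η))) :=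
            key η η.2
        _ ≤ C * Real.exp (-(n:ℝ) * (s - ε)) := by
            refine mul_le_mul_of_nonneg_left ?_ (by linarith : (0:ℝ) ≤ C)
            apply Real.exp_le_exp.mpr
            have hn0 : (0:ℝ) ≤ (n:ℝ) := Nat.cast_nonneg n
            nlinarith
    have htt : Filter.Tendsto (fun ε : ℝ => C * Real.exp (-(n:ℝ) * (s - ε)))
        (nhdsWithin 0 (Set.Ioi 0)) (nhds (C * Real.exp (-(n:ℝ) * s))) := by
      have hcont : Filter.Tendsto (fun ε : ℝ => C * Real.exp (-(n:ℝ) * (s - ε)))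
          (nhds 0) (nhds (C * Real.exp (-(n:ℝ) * s))) := by
        have hcont2 : Continuous (fun ε : ℝ => C * Real.exp (-(n:ℝ) * (s - ε))) :=
          continuous_const.mul (Real.continuous_exp.comp
            (continuous_const.mul ((continuous_const.sub continuous_id))))
        have h0 := hcont2.tendsto 0
        simpa using h0
      exact hcont.mono_left nhdsWithin_le_nhds
    exact ge_of_tendsto htt
      (eventually_nhdsWithin_of_forall fun ε (hε : ε ∈ Set.Ioi (0:ℝ)) => hεb ε hε)
  · rw [Real.iSup_of_not_bddAbove hbdd]
    simp only [mul_zero, Real.exp_zero, mul_one]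
    linarith
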